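/- Let Λ be a finite type and let μ : Λ → ℝ≥0 be a probability mass function (∑_λ μ(λ) = 1). Let y_A¹, y_B¹, y_A², y_B² : Bool → Bool → Λ → Bool be functions (outputs under two sequences of updates, as functions of x_A, x_B, and the randomness λ). Suppose: (i) y_A¹ does not depend on its second argument, i.e. y_A¹(x_A, x_B, λ) = y_A¹(x_A, x_B', λ) for all x_A, x_B, x_B', λ; (ii) y_B² does not depend on its first argument, i.e. y_B²(x_A, x_B, λ) = y_B²(x_A', x_B, λ) for all x_A, x_A', x_B, λ; and (iii) the success probability (1/4) · ∑_{x_A, x_B ∈ Bool} ∑_{λ ∈ Λ} μ(λ) · (indicator that xor (y_A¹ x_A x_B λ) (y_B¹ x_A x_B λ) = (x_A && x_B)) is strictly greater than 3/4. Then there exist x_A, x_B ∈ Bool and λ ∈ Λ with μ(λ) > 0 such that y_A¹(x_A, x_B, λ) ≠ y_A²(x_A, x_B, λ) or y_B¹(x_A, x_B, λ) ≠ y_B²(x_A, x_B, λ). -/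

import Mathlib

lemma chsh_bool (a b : Bool → Bool) :
    (∑ xA : Bool, ∑ xB : Bool,
      (if xor (a xA) (b xB) = (xA && xB) then (1 : NNReal) else 0)) ≤ 3 := by
  rw [Fintype.sum_bool, Fintype.sum_bool, Fintype.sum_bool]
  cases h0 : a false <;> cases h1 : a true <;> cases h2 : b false <;> cases h3 : b true <;>
    simp [h0, h1, h2, h3] <;> norm_num

theorem bell_violation_breaks_causal_invariance
    (Λ : Type*) [Fintype Λ] (μ : Λ → NNReal) (hμ : ∑ l : Λ, μ l = 1)
    (yA1 yB1 yA2 yB2 : Bool → Bool → Λ → Bool)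
    (h1 : ∀ xA xB xB' l, yA1 xA xB l = yA1 xA xB' l)
    (h2 : ∀ xA xA' xB l, yB2 xA xB l = yB2 xA' xB l)
    (h3 : (3 / 4 : NNReal) <
      (1 / 4 : NNReal) * ∑ xA : Bool, ∑ xB : Bool, ∑ l : Λ,
        μ l * (if xor (yA1 xA xB l) (yB1 xA xB l) = (xA && xB) then 1 else 0)) :
    ∃ (xA xB : Bool) (l : Λ), 0 < μ l ∧
      (yA1 xA xB l ≠ yA2 xA xB l ∨ yB1 xA xB l ≠ yB2 xA xB l) := by
  by_contra hcon
  push_neg at hcon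
  -- On the support, yB1 does not depend on xA and yA1 not on xB.
  have key : ∀ l, μ l * (∑ xA : Bool, ∑ xB : Bool,
      (if xor (yA1 xA xB l) (yB1 xA xB l) = (xA && xB) then (1 : NNReal) else 0)) ≤ μ l * 3 := by
    intro l
    rcases eq_or_lt_of_le (zero_le : 0 ≤ μ l) with hz | hp
    · rw [← hz, zero_mul, zero_mul]
    · apply mul_le_mul_right
      have hB : ∀ xA xB, yB1 xA xB l = yB1 true xB l := by
        intro xA xB
        have e1 := (hcon xA xB l hp).2
        have e2 := (hcon true xB l hp).2
        rw [e1, e2, h2 xA true xB l]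
      have hA : ∀ xA xB, yA1 xA xB l = yA1 xA true l := fun xA xB => h1 xA xB true l
      calc (∑ xA : Bool, ∑ xB : Bool,
          (if xor (yA1 xA xB l) (yB1 xA xB l) = (xA && xB) then (1 : NNReal) else 0))
          = ∑ xA : Bool, ∑ xB : Bool,
          (if xor (yA1 xA true l) (yB1 true xB l) = (xA && xB) then (1 : NNReal) else 0) := by
            apply Finset.sum_congr rfl; intro xA _
            apply Finset.sum_congr rfl; intro xB _
            rw [hA xA xB, hB xA xB]
        _ ≤ 3 := chsh_bool (fun xA => yA1 xA true l) (fun xB => yB1 true xB l)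
  have hsum : (∑ xA : Bool, ∑ xB : Bool, ∑ l : Λ,
      μ l * (if xor (yA1 xA xB l) (yB1 xA xB l) = (xA && xB) then (1 : NNReal) else 0)) ≤ 3 := by
    have swap : (∑ xA : Bool, ∑ xB : Bool, ∑ l : Λ,
        μ l * (if xor (yA1 xA xB l) (yB1 xA xB l) = (xA && xB) then (1 : NNReal) else 0))
        = ∑ l : Λ, μ l * (∑ xA : Bool, ∑ xB : Bool,
        (if xor (yA1 xA xB l) (yB1 xA xB l) = (xA && xB) then (1 : NNReal) else 0)) := by
      calc (∑ xA : Bool, ∑ xB : Bool, ∑ l : Λ,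
          μ l * (if xor (yA1 xA xB l) (yB1 xA xB l) = (xA && xB) then (1 : NNReal) else 0))
          = ∑ xA : Bool, ∑ l : Λ, ∑ xB : Bool,
          μ l * (if xor (yA1 xA xB l) (yB1 xA xB l) = (xA && xB) then (1 : NNReal) else 0) :=
            Finset.sum_congr rfl fun xA _ => Finset.sum_comm
        _ = ∑ l : Λ, ∑ xA : Bool, ∑ xB : Bool,
          μ l * (if xor (yA1 xA xB l) (yB1 xA xB l) = (xA && xB) then (1 : NNReal) else 0) :=
            Finset.sum_comm
        _ = ∑ l : Λ, μ l * (∑ xA : Bool, ∑ xB : Bool,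
          (if xor (yA1 xA xB l) (yB1 xA xB l) = (xA && xB) then (1 : NNReal) else 0)) := by
            simp_rw [← Finset.mul_sum]
    rw [swap]
    calc ∑ l : Λ, μ l * (∑ xA : Bool, ∑ xB : Bool,
        (if xor (yA1 xA xB l) (yB1 xA xB l) = (xA && xB) then (1 : NNReal) else 0))
        ≤ ∑ l : Λ, μ l * 3 := Finset.sum_le_sum fun l _ => key l
      _ = 3 := by rw [← Finset.sum_mul, hμ, one_mul]
  have : (1 / 4 : NNReal) * (∑ xA : Bool, ∑ xB : Bool, ∑ l : Λ,
      μ l * (if xor (yA1 xA xB l) (yB1 xA xB l) = (xA && xB) then (1 : NNReal) else 0))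
      ≤ (1 / 4 : NNReal) * 3 := mul_le_mul_right hsum _
  have h34 : (1 / 4 : NNReal) * 3 = 3 / 4 := by
    rw [div_mul_eq_mul_div, one_mul]
  rw [h34] at this
  exact absurd h3 (not_lt.mpr this)
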